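/- Let p > 0 and α = 1/p. The sequence g(j) = (log(j+2))^{-α} belongs to the weak weighted class ℓ^{p,∞}_v with weight v(j) = 1/(j+1); that is, sup_{s>0} s^p · ∑_{j : g(j) > s} 1/(j+1) < ∞. -/

import Mathlib

theorem weak_class_discrete (p α : ℝ) (hp : 0 < p) (hα : α = 1/p) :
    ∃ C : ℝ, ∀ s > (0 : ℝ),
      s ^ p * ∑' j : {j : ℕ // s < (Real.log ((j : ℝ) + 2)) ^ (-α)},
        (1 : ℝ) / ((j.1 : ℝ) + 1) ≤ C := by
  have hlog2 : (0:ℝ) < Real.log 2 := Real.log_pos (by norm_num)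
  refine ⟨1 / Real.log 2 + 1, fun s hs => ?_⟩
  set f : ℕ → ℝ := fun j => (1 : ℝ) / ((j : ℝ) + 1) with hf
  have hf0 : ∀ j, 0 ≤ f j := fun j => by positivity
  set S : Set ℕ := {j : ℕ | s < (Real.log ((j : ℝ) + 2)) ^ (-α)} with hSdef
  have hsp : (0:ℝ) < s ^ p := Real.rpow_pos_of_pos hs p
  have hlogpos : ∀ j : ℕ, (0:ℝ) < Real.log ((j:ℝ) + 2) := fun j =>
    Real.log_pos (by have := Nat.cast_nonneg (α := ℝ) j; linarith)
  have hkey : ∀ j : ℕ, j ∈ S → Real.log ((j:ℝ) + 2) < s ^ (-p) := by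
    intro j hj
    have ht := hlogpos j
    have h1 : s ^ p < ((Real.log ((j:ℝ)+2)) ^ (-α)) ^ p :=
      Real.rpow_lt_rpow hs.le hj hp
    rw [← Real.rpow_mul ht.le] at h1
    have hαp : -α * p = -1 := by rw [hα, neg_mul, one_div, inv_mul_cancel₀ hp.ne']
    rw [hαp, Real.rpow_neg_one] at h1
    have h2 : Real.log ((j:ℝ)+2) < (s ^ p)⁻¹ := (lt_inv_comm₀ hsp ht).mp h1
    rwa [← Real.rpow_neg hs.le] at h2
  by_cases hne : S.Nonempty
  · obtain ⟨j0, hj0⟩ := hne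
    -- bound on s^p
    have hsp_le : s ^ p ≤ 1 / Real.log 2 := by
      have h1 := hkey j0 hj0
      have h2 : Real.log 2 ≤ Real.log ((j0:ℝ) + 2) := by
        apply Real.log_le_log (by norm_num)
        have := Nat.cast_nonneg (α := ℝ) j0; linarith
      have h3 : Real.log 2 < (s ^ p)⁻¹ := by
        rw [Real.rpow_neg hs.le] at h1; linarith
      rw [one_div]
      exact ((lt_inv_comm₀ hsp hlog2).mpr h3).le
    set N : ℕ := ⌊Real.exp (s ^ (-p))⌋₊ with hN
    have hsub : S ⊆ ↑(Finset.range N) := by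
      intro j hj
      have h1 := hkey j hj
      have h2 : ((j:ℝ) + 2) < Real.exp (s ^ (-p)) := by
        have := Real.exp_lt_exp.mpr h1
        rwa [Real.exp_log (by positivity)] at this
      have hjN : j + 2 ≤ N := Nat.le_floor (by push_cast; linarith)
      simp only [Finset.coe_range, Set.mem_Iio]
      omega
    have hsum1 : Summable (S.indicator f) := by
      apply summable_of_ne_finset_zero (s := Finset.range N)
      intro j hjn
      exact Set.indicator_of_notMem (fun hjS => hjn (hsub hjS)) f
    have hsum2 : Summable ((↑(Finset.range N) : Set ℕ).indicator f) := by
      apply summable_of_ne_finset_zero (s := Finset.range N)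
      intro j hjn
      exact Set.indicator_of_notMem (by simpa using hjn) f
    have hbound : (∑' j : S, f j) ≤ 1 + s ^ (-p) := by
      have e1 : (∑' j : S, f j) = ∑' j : ℕ, S.indicator f j := tsum_subtype S f
      have e2 : ∑' j : ℕ, (↑(Finset.range N) : Set ℕ).indicator f j
          = ∑ j ∈ Finset.range N, f j := by
        rw [← tsum_subtype, Finset.tsum_subtype']
      have e3 : (∑ j ∈ Finset.range N, f j) = (harmonic N : ℝ) := by
        rw [harmonic]; push_cast; simp [hf, one_div]
      have e4 : (harmonic N : ℝ) ≤ 1 + Real.log N := harmonic_le_one_add_log N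
      have e5 : Real.log N ≤ s ^ (-p) := by
        rcases Nat.eq_zero_or_pos N with h | h
        · simp [h]; positivity
        · rw [Real.log_le_iff_le_exp (by exact_mod_cast h)]
          exact Nat.floor_le (Real.exp_pos _).le
      calc (∑' j : S, f j) = ∑' j : ℕ, S.indicator f j := e1
        _ ≤ ∑' j : ℕ, (↑(Finset.range N) : Set ℕ).indicator f j :=
            Summable.tsum_le_tsum (fun j => Set.indicator_le_indicator_of_subset hsub hf0 j) hsum1 hsum2
        _ = ∑ j ∈ Finset.range N, f j := e2
        _ = (harmonic N : ℝ) := e3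
        _ ≤ 1 + Real.log N := e4
        _ ≤ 1 + s ^ (-p) := by linarith
    have hmul : s ^ p * (∑' j : S, f j) ≤ s ^ p * (1 + s ^ (-p)) :=
      mul_le_mul_of_nonneg_left hbound hsp.le
    have hid : s ^ p * (1 + s ^ (-p)) = s ^ p + 1 := by
      rw [mul_add, mul_one, ← Real.rpow_add hs, add_neg_cancel, Real.rpow_zero]
    calc s ^ p * (∑' j : S, f j) ≤ s ^ p + 1 := by rw [← hid]; exact hmul
      _ ≤ 1 / Real.log 2 + 1 := by linarith
  · have hempty : IsEmpty {j : ℕ // s < (Real.log ((j : ℝ) + 2)) ^ (-α)} :=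
      ⟨fun x => hne ⟨x.1, x.2⟩⟩
    haveI := hempty
    rw [tsum_empty, mul_zero]
    positivity
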